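/- Let (M,g) be a compact Riemannian manifold, H ⊂ M a smooth embedded hypersurface, and μ an invariant probability measure for the geodesic flow φ_t on the unit cosphere bundle S*M. Then the restriction of μ to S*_H M (covectors with footpoint on H) equals the restriction of μ to S*H (unit covectors tangent to H); i.e., μ(S*_H M \ S*H) = 0. -/

import Mathlib

open MeasureTheory Set Filter Topology

/-- Abstract model of the geodesic flow on the unit cosphere bundle `X = S*M`
of a compact Riemannian manifold, near a hypersurface `H`.  `xn` is the (Fermi) signed
normal coordinate and `ξn` the dual normal momentum, so that
`S*_H M = {xn = 0}` and `S*H = {xn = 0, ξn = 0}`; along the geodesic flow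
`d/dt xn(φ_t ρ) = 2 ξn(φ_t ρ)`.  For any flow-invariant Borel probability measure `μ`,
the restriction of `μ` to `S*_H M` equals its restriction to `S*H`, i.e.
`μ(S*_H M \ S*H) = 0`. -/
theorem stmt_3 {X : Type*} [MetricSpace X] [CompactSpace X]
    [MeasurableSpace X] [BorelSpace X]
    (φ : Flow ℝ X) (μ : Measure X) [IsProbabilityMeasure μ]
    (hinv : ∀ t : ℝ, μ.map (φ.toFun t) = μ)
    (xn ξn : X → ℝ) (hxn : Continuous xn) (hξn : Continuous ξn)
    (hderiv : ∀ (ρ : X) (t : ℝ),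
      HasDerivAt (fun s : ℝ => xn (φ.toFun s ρ)) (2 * ξn (φ.toFun t ρ)) t) :
    μ {ρ : X | xn ρ = 0 ∧ ξn ρ ≠ 0} = 0 := by
  set A : Set X := {ρ : X | xn ρ = 0 ∧ ξn ρ ≠ 0} with hA
  have hφ : Continuous fun p : ℝ × X => φ.toFun p.1 p.2 := φ.cont'
  have hAmeas : MeasurableSet A := by
    have : A = xn ⁻¹' {0} ∩ (ξn ⁻¹' {0})ᶜ := by
      ext ρ; simp [hA, Set.mem_setOf_eq]
    rw [this]
    exact (hxn.measurable (measurableSet_singleton 0)).inter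
      (hξn.measurable (measurableSet_singleton 0)).compl
  set S : Set (ℝ × X) := {p : ℝ × X | φ.toFun p.1 p.2 ∈ A} with hS
  have hSmeas : MeasurableSet S := hφ.measurable hAmeas
  set ν : Measure ℝ := volume.restrict (Set.Icc (0:ℝ) 1) with hν
  have h1 : (ν.prod μ) S = μ A := by
    rw [Measure.prod_apply hSmeas]
    have : ∀ t : ℝ, μ (Prod.mk t ⁻¹' S) = μ A := by
      intro t
      have hm : Measurable (φ.toFun t) :=
        (hφ.comp (continuous_const.prodMk continuous_id)).measurable
      have hpre : Prod.mk t ⁻¹' S = φ.toFun t ⁻¹' A := rfl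
      rw [hpre, ← Measure.map_apply hm hAmeas, hinv t]
    simp only [this]
    simp [hν]
  have h2 : (ν.prod μ) S = 0 := by
    rw [Measure.prod_apply_symm hSmeas]
    have hslice : ∀ ρ : X, ν ((fun t => (t, ρ)) ⁻¹' S) = 0 := by
      intro ρ
      set T : Set ℝ := (fun t => (t, ρ)) ⁻¹' S with hT
      have hcnt : T.Countable := by
        have hdisc : DiscreteTopology T := by
          rw [discreteTopology_subtype_iff]
          intro t ht
          have ht' : xn (φ.toFun t ρ) = 0 ∧ ξn (φ.toFun t ρ) ≠ 0 := ht
          -- slope tendsto nonzero limit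
          have hslope : Tendsto (slope (fun s => xn (φ.toFun s ρ)) t) (𝓝[≠] t)
              (𝓝 (2 * ξn (φ.toFun t ρ))) :=
            hasDerivAt_iff_tendsto_slope.mp (hderiv ρ t)
          have hne : (2 * ξn (φ.toFun t ρ)) ≠ 0 := by
            simpa using ht'.2
          have hev : ∀ᶠ s in 𝓝[≠] t, slope (fun s => xn (φ.toFun s ρ)) t s ≠ 0 :=
            hslope (isOpen_compl_singleton.mem_nhds hne)
          have hev2 : ∀ᶠ s in 𝓝[≠] t, s ∉ T := by
            filter_upwards [hev, self_mem_nhdsWithin] with s hs hsne hsT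
            apply hs
            have : xn (φ.toFun s ρ) = 0 := hsT.1
            simp [slope, this, ht'.1]
          -- conclude 𝓝[T \ {t}] t = ⊥
          rw [← empty_mem_iff_bot]
          have hTc : Tᶜ ∈ 𝓝[≠] t := hev2
          have hmem := inter_mem (mem_inf_of_left hTc)
            (mem_inf_of_right (mem_principal_self T))
          have heq : Tᶜ ∩ T = (∅ : Set ℝ) := compl_inter_self T
          rwa [heq] at hmem
        have : Countable T := by
          haveI : TopologicalSpace.SeparableSpace T := by infer_instance
          exact TopologicalSpace.separableSpace_iff_countable.mp inferInstance
        exact Set.countable_coe_iff.mp this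
      exact le_antisymm ((Measure.restrict_le_self T).trans_eq (hcnt.measure_zero _)) zero_le
    simp only [hslice, lintegral_zero]
  rw [← h1, h2]
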